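/- Let p be an odd prime and n a positive integer with p^n ≡ 7 (mod 8), and set d = (p^n+1)/4 + (p^n−1)/2. Then the power function f(x)=x^d on F_{p^n} satisfies _{−1}Δ_f ≤ 3: for all a, b ∈ F_{p^n}, the equation (x+a)^d + x^d = b has at most 3 solutions x ∈ F_{p^n}. -/

import Mathlib

set_option maxHeartbeats 1000000 in
/-- Theorem 3.5 (Theorem `thmd`), first case: `p^n ≡ 7 (mod 8)` and
`d = (p^n+1)/4 + (p^n-1)/2`. Then `₋₁Δ_f ≤ 3` for `f(x) = x^d` on `F_{p^n}`. -/
theorem stmt_10 (p n : ℕ) (hp : p.Prime) (hodd : Odd p) (hn0 : 0 < n)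
    (hmod : p ^ n % 8 = 7) (d : ℕ) (hd : d = (p ^ n + 1) / 4 + (p ^ n - 1) / 2)
    (F : Type*) [Field F] [Fintype F] (hcard : Fintype.card F = p ^ n)
    (a b : F) :
    {x : F | (x + a) ^ d + x ^ d = b}.ncard ≤ 3 := by
  classical
  obtain ⟨k, hk⟩ : ∃ k, p ^ n = 8 * k + 7 := ⟨p ^ n / 8, by omega⟩
  have hd' : d = 6 * k + 5 := by omega
  subst hd'
  -- `2 ≠ 0` in `F`
  have two_ne : (2 : F) ≠ 0 := by
    intro h2
    have hc : ((p ^ n : ℕ) : F) = 0 := by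
      rw [← hcard]; exact FiniteField.cast_card_eq_zero F
    rw [hk] at hc
    push_cast at hc
    exact one_ne_zero (show (1 : F) = 0 by linear_combination hc - ((4 : F) * k + 3) * h2)
  -- basic power identities
  have h1 : ∀ x : F, x ≠ 0 → x ^ (8 * k + 6) = 1 := by
    intro x hx
    have := FiniteField.pow_card_sub_one_eq_one x hx
    rwa [hcard, hk, show 8 * k + 7 - 1 = 8 * k + 6 from rfl] at this
  have red : ∀ x : F, x ≠ 0 → ∀ s t j : ℕ, s = t + (8 * k + 6) * j → x ^ s = x ^ t := by
    intro x hx s t j hst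
    rw [hst, pow_add, pow_mul, h1 x hx, one_pow, mul_one]
  have hm : ∀ x : F, x ≠ 0 → x ^ (4 * k + 3) = 1 ∨ x ^ (4 * k + 3) = -1 := by
    intro x hx
    refine mul_self_eq_one_iff.mp ?_
    rw [← pow_add, show 4 * k + 3 + (4 * k + 3) = 8 * k + 6 by ring]
    exact h1 x hx
  have hxd : ∀ x : F, x ≠ 0 → x = x ^ (4 * k + 3) * (x ^ (6 * k + 5)) ^ 2 := by
    intro x hx
    have e1 : x ^ (4 * k + 3 + (6 * k + 5) * 2) = x ^ (4 * k + 3) * (x ^ (6 * k + 5)) ^ 2 := by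
      rw [pow_add, pow_mul]
    have e2 : x ^ (4 * k + 3 + (6 * k + 5) * 2) = x ^ 1 := red x hx _ 1 2 (by ring)
    rw [← e1, e2, pow_one]
  have hsd : ∀ x : F, x ≠ 0 → (x ^ (6 * k + 5)) ^ (4 * k + 3) = x ^ (4 * k + 3) := by
    intro x hx
    rw [← pow_mul]
    exact red x hx _ (4 * k + 3) (3 * k + 2) (by ring)
  have inj : ∀ x y : F, x ^ (6 * k + 5) = y ^ (6 * k + 5) → x = y := by
    intro x y h
    by_cases hx : x = 0
    · subst hx
      rw [zero_pow (show 6 * k + 5 ≠ 0 by omega)] at h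
      exact ((pow_eq_zero_iff (show 6 * k + 5 ≠ 0 by omega)).mp h.symm).symm
    by_cases hy : y = 0
    · subst hy
      rw [zero_pow (show 6 * k + 5 ≠ 0 by omega)] at h
      exact (pow_eq_zero_iff (show 6 * k + 5 ≠ 0 by omega)).mp h
    calc x = x ^ (4 * k + 3) * (x ^ (6 * k + 5)) ^ 2 := hxd x hx
      _ = y ^ (4 * k + 3) * (y ^ (6 * k + 5)) ^ 2 := by
          rw [← hsd x hx, h, hsd y hy]
      _ = y := (hxd y hy).symm
  by_cases ha : a = 0
  · -- `a = 0`: the map `x ↦ x^d` is injective, so exactly one solution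
    refine le_trans ((Set.ncard_le_one_iff (Set.toFinite _)).mpr ?_) (by norm_num)
    intro x y hx hy
    simp only [Set.mem_setOf_eq] at hx hy
    rw [ha, add_zero] at hx hy
    refine inj x y (mul_left_cancel₀ two_ne ?_)
    linear_combination hx - hy
  -- main case `a ≠ 0`
  have core : ∀ x : F, (x + a) ^ (6 * k + 5) + x ^ (6 * k + 5) = b → x ≠ 0 → x + a ≠ 0 →
      x ^ (6 * k + 5) ≠ 0 ∧ b - x ^ (6 * k + 5) ≠ 0 ∧
      x = x ^ (4 * k + 3) * (x ^ (6 * k + 5)) ^ 2 ∧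
      x + a = (x + a) ^ (4 * k + 3) * (b - x ^ (6 * k + 5)) ^ 2 ∧
      (x ^ (6 * k + 5)) ^ (4 * k + 3) = x ^ (4 * k + 3) ∧
      (b - x ^ (6 * k + 5)) ^ (4 * k + 3) = (x + a) ^ (4 * k + 3) := by
    intro x hx hx0 hxa
    have hu : (x + a) ^ (6 * k + 5) = b - x ^ (6 * k + 5) := by linear_combination hx
    have e2 := hxd (x + a) hxa
    have e4 := hsd (x + a) hxa
    rw [hu] at e2 e4
    exact ⟨pow_ne_zero _ hx0, by rw [← hu]; exact pow_ne_zero _ hxa, hxd x hx0, e2,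
      hsd x hx0, e4⟩
  have hOb : ((0 : F) + a) ^ (6 * k + 5) + (0 : F) ^ (6 * k + 5) = b →
      b ≠ 0 ∧ a = b ^ (4 * k + 3) * b ^ 2 := by
    intro h
    rw [zero_add, zero_pow (show 6 * k + 5 ≠ 0 by omega), add_zero] at h
    have hb : b ≠ 0 := by rw [← h]; exact pow_ne_zero _ ha
    have e1 := hxd a ha
    have e2 := hsd a ha
    rw [h] at e1 e2
    exact ⟨hb, by rw [e2]; exact e1⟩
  have hNb : (-a + a) ^ (6 * k + 5) + (-a : F) ^ (6 * k + 5) = b →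
      b ≠ 0 ∧ -a = b ^ (4 * k + 3) * b ^ 2 := by
    intro h
    have hna : (-a : F) ≠ 0 := neg_ne_zero.mpr ha
    rw [neg_add_cancel, zero_pow (show 6 * k + 5 ≠ 0 by omega), zero_add] at h
    have hb : b ≠ 0 := by rw [← h]; exact pow_ne_zero _ hna
    have e1 := hxd (-a) hna
    have e2 := hsd (-a) hna
    rw [h] at e1 e2
    exact ⟨hb, by rw [e2]; exact e1⟩
  have hPb : ∀ x : F, (x + a) ^ (6 * k + 5) + x ^ (6 * k + 5) = b → x ≠ 0 → x + a ≠ 0 →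
      x ^ (4 * k + 3) = 1 → (x + a) ^ (4 * k + 3) = 1 →
      x ^ (6 * k + 5) ≠ 0 ∧ b - x ^ (6 * k + 5) ≠ 0 ∧ x = (x ^ (6 * k + 5)) ^ 2 ∧
      2 * b * x ^ (6 * k + 5) = b ^ 2 - a ∧ (x ^ (6 * k + 5)) ^ (4 * k + 3) = 1 ∧
      (b - x ^ (6 * k + 5)) ^ (4 * k + 3) = 1 ∧ b ≠ 0 := by
    intro x hx hx0 hxa hs1 hs2
    obtain ⟨hv0, hbv, e1, e2, e3, e4⟩ := core x hx hx0 hxa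
    rw [hs1, one_mul] at e1
    rw [hs2, one_mul] at e2
    have key : 2 * b * x ^ (6 * k + 5) = b ^ 2 - a := by linear_combination e2 - e1
    have hb : b ≠ 0 := by
      intro hb0
      exact ha (by rw [hb0] at key; linear_combination key)
    exact ⟨hv0, hbv, e1, key, by rw [e3, hs1], by rw [e4, hs2], hb⟩
  have hMb : ∀ x : F, (x + a) ^ (6 * k + 5) + x ^ (6 * k + 5) = b → x ≠ 0 → x + a ≠ 0 →
      x ^ (4 * k + 3) = -1 → (x + a) ^ (4 * k + 3) = -1 →
      x ^ (6 * k + 5) ≠ 0 ∧ b - x ^ (6 * k + 5) ≠ 0 ∧ x = -1 * (x ^ (6 * k + 5)) ^ 2 ∧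
      2 * b * x ^ (6 * k + 5) = b ^ 2 + a ∧ (x ^ (6 * k + 5)) ^ (4 * k + 3) = -1 ∧
      (b - x ^ (6 * k + 5)) ^ (4 * k + 3) = -1 ∧ b ≠ 0 := by
    intro x hx hx0 hxa hs1 hs2
    obtain ⟨hv0, hbv, e1, e2, e3, e4⟩ := core x hx hx0 hxa
    rw [hs1] at e1
    rw [hs2] at e2
    have key : 2 * b * x ^ (6 * k + 5) = b ^ 2 + a := by linear_combination e1 - e2
    have hb : b ≠ 0 := by
      intro hb0
      exact ha (by rw [hb0] at key; linear_combination -key)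
    exact ⟨hv0, hbv, e1, key, by rw [e3, hs1], by rw [e4, hs2], hb⟩
  -- the three pieces
  set T1 : Set F := {x : F | (x + a) ^ (6 * k + 5) + x ^ (6 * k + 5) = b ∧
    (x = 0 ∨ x = -a ∨
      (x ≠ 0 ∧ x + a ≠ 0 ∧ x ^ (4 * k + 3) = 1 ∧ (x + a) ^ (4 * k + 3) = 1) ∨
      (x ≠ 0 ∧ x + a ≠ 0 ∧ x ^ (4 * k + 3) = -1 ∧ (x + a) ^ (4 * k + 3) = -1))} with hT1def
  set T2 : Set F := {x : F | (x + a) ^ (6 * k + 5) + x ^ (6 * k + 5) = b ∧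
    x ≠ 0 ∧ x + a ≠ 0 ∧ x ^ (4 * k + 3) = 1 ∧ (x + a) ^ (4 * k + 3) = -1} with hT2def
  set T3 : Set F := {x : F | (x + a) ^ (6 * k + 5) + x ^ (6 * k + 5) = b ∧
    x ≠ 0 ∧ x + a ≠ 0 ∧ x ^ (4 * k + 3) = -1 ∧ (x + a) ^ (4 * k + 3) = 1} with hT3def
  have hT1 : ∀ x y : F, x ∈ T1 → y ∈ T1 → x = y := by
    rintro x y ⟨hxS, hxC⟩ ⟨hyS, hyC⟩
    rcases hxC with rfl | rfl | ⟨hx0, hxa0, hx1, hx2⟩ | ⟨hx0, hxa0, hx1, hx2⟩ <;>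
      rcases hyC with rfl | rfl | ⟨hy0, hya0, hy1, hy2⟩ | ⟨hy0, hya0, hy1, hy2⟩
    -- (O,O)
    · rfl
    -- (O,N)
    · obtain ⟨hbO, habO⟩ := hOb hxS
      obtain ⟨hbN, habN⟩ := hNb hyS
      exact absurd (mul_left_cancel₀ two_ne
        (show (2 : F) * a = 2 * 0 by linear_combination habO - habN)) ha
    -- (O,P)
    · obtain ⟨hbO, habO⟩ := hOb hxS
      obtain ⟨hw0, hbw, hyv, key, sw, sbw, hb⟩ := hPb y hyS hy0 hya0 hy1 hy2
      rcases hm b hbO with hb1 | hb1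
      · exact absurd (mul_left_cancel₀ (mul_ne_zero two_ne hbO)
          (show 2 * b * y ^ (6 * k + 5) = 2 * b * 0 by
            linear_combination key - habO - b ^ 2 * hb1)) hw0
      · have hwb : y ^ (6 * k + 5) = b := mul_left_cancel₀ (mul_ne_zero two_ne hbO)
          (show 2 * b * y ^ (6 * k + 5) = 2 * b * b by
            linear_combination key - habO - b ^ 2 * hb1)
        exact absurd (by rw [hwb, sub_self]) hbw
    -- (O,M)
    · obtain ⟨hbO, habO⟩ := hOb hxS
      obtain ⟨hw0, hbw, hyv, key, sw, sbw, hb⟩ := hMb y hyS hy0 hya0 hy1 hy2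
      rcases hm b hbO with hb1 | hb1
      · have hwb : y ^ (6 * k + 5) = b := mul_left_cancel₀ (mul_ne_zero two_ne hbO)
          (show 2 * b * y ^ (6 * k + 5) = 2 * b * b by
            linear_combination key + habO + b ^ 2 * hb1)
        exact absurd (by rw [hwb, sub_self]) hbw
      · exact absurd (mul_left_cancel₀ (mul_ne_zero two_ne hbO)
          (show 2 * b * y ^ (6 * k + 5) = 2 * b * 0 by
            linear_combination key + habO + b ^ 2 * hb1)) hw0
    -- (N,O)
    · obtain ⟨hbN, habN⟩ := hNb hxS
      obtain ⟨hbO, habO⟩ := hOb hyS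
      exact absurd (mul_left_cancel₀ two_ne
        (show (2 : F) * a = 2 * 0 by linear_combination habO - habN)) ha
    -- (N,N)
    · rfl
    -- (N,P)
    · obtain ⟨hbN, habN⟩ := hNb hxS
      obtain ⟨hw0, hbw, hyv, key, sw, sbw, hb⟩ := hPb y hyS hy0 hya0 hy1 hy2
      rcases hm b hbN with hb1 | hb1
      · have hwb : y ^ (6 * k + 5) = b := mul_left_cancel₀ (mul_ne_zero two_ne hbN)
          (show 2 * b * y ^ (6 * k + 5) = 2 * b * b by
            linear_combination key + habN + b ^ 2 * hb1)
        exact absurd (by rw [hwb, sub_self]) hbw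
      · exact absurd (mul_left_cancel₀ (mul_ne_zero two_ne hbN)
          (show 2 * b * y ^ (6 * k + 5) = 2 * b * 0 by
            linear_combination key + habN + b ^ 2 * hb1)) hw0
    -- (N,M)
    · obtain ⟨hbN, habN⟩ := hNb hxS
      obtain ⟨hw0, hbw, hyv, key, sw, sbw, hb⟩ := hMb y hyS hy0 hya0 hy1 hy2
      rcases hm b hbN with hb1 | hb1
      · exact absurd (mul_left_cancel₀ (mul_ne_zero two_ne hbN)
          (show 2 * b * y ^ (6 * k + 5) = 2 * b * 0 by
            linear_combination key - habN - b ^ 2 * hb1)) hw0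
      · have hwb : y ^ (6 * k + 5) = b := mul_left_cancel₀ (mul_ne_zero two_ne hbN)
          (show 2 * b * y ^ (6 * k + 5) = 2 * b * b by
            linear_combination key - habN - b ^ 2 * hb1)
        exact absurd (by rw [hwb, sub_self]) hbw
    -- (P,O)
    · obtain ⟨hbO, habO⟩ := hOb hyS
      obtain ⟨hv0, hbv, hxv, key, sv, sbv, hb⟩ := hPb x hxS hx0 hxa0 hx1 hx2
      rcases hm b hbO with hb1 | hb1
      · exact absurd (mul_left_cancel₀ (mul_ne_zero two_ne hbO)
          (show 2 * b * x ^ (6 * k + 5) = 2 * b * 0 by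
            linear_combination key - habO - b ^ 2 * hb1)) hv0
      · have hwb : x ^ (6 * k + 5) = b := mul_left_cancel₀ (mul_ne_zero two_ne hbO)
          (show 2 * b * x ^ (6 * k + 5) = 2 * b * b by
            linear_combination key - habO - b ^ 2 * hb1)
        exact absurd (by rw [hwb, sub_self]) hbv
    -- (P,N)
    · obtain ⟨hbN, habN⟩ := hNb hyS
      obtain ⟨hv0, hbv, hxv, key, sv, sbv, hb⟩ := hPb x hxS hx0 hxa0 hx1 hx2
      rcases hm b hbN with hb1 | hb1
      · have hwb : x ^ (6 * k + 5) = b := mul_left_cancel₀ (mul_ne_zero two_ne hbN)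
          (show 2 * b * x ^ (6 * k + 5) = 2 * b * b by
            linear_combination key + habN + b ^ 2 * hb1)
        exact absurd (by rw [hwb, sub_self]) hbv
      · exact absurd (mul_left_cancel₀ (mul_ne_zero two_ne hbN)
          (show 2 * b * x ^ (6 * k + 5) = 2 * b * 0 by
            linear_combination key + habN + b ^ 2 * hb1)) hv0
    -- (P,P)
    · obtain ⟨hv0, hbv, hxv, keyx, sv, sbv, hb⟩ := hPb x hxS hx0 hxa0 hx1 hx2
      obtain ⟨hw0, hbw, hyv, keyy, sw, sbw, _⟩ := hPb y hyS hy0 hya0 hy1 hy2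
      have hvw : x ^ (6 * k + 5) = y ^ (6 * k + 5) :=
        mul_left_cancel₀ (mul_ne_zero two_ne hb) (by linear_combination keyx - keyy)
      rw [hxv, hyv, hvw]
    -- (P,M)
    · obtain ⟨hv0, hbv, hxv, keyx, sv, sbv, hb⟩ := hPb x hxS hx0 hxa0 hx1 hx2
      obtain ⟨hw0, hbw, hyv, keyy, sw, sbw, _⟩ := hMb y hyS hy0 hya0 hy1 hy2
      have hw : y ^ (6 * k + 5) = b - x ^ (6 * k + 5) :=
        mul_left_cancel₀ (mul_ne_zero two_ne hb)
          (show 2 * b * y ^ (6 * k + 5) = 2 * b * (b - x ^ (6 * k + 5)) by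
            linear_combination keyy + keyx)
      rw [hw] at sw
      exact absurd (sbv.symm.trans sw) (fun h => two_ne (by linear_combination h))
    -- (M,O)
    · obtain ⟨hbO, habO⟩ := hOb hyS
      obtain ⟨hv0, hbv, hxv, key, sv, sbv, hb⟩ := hMb x hxS hx0 hxa0 hx1 hx2
      rcases hm b hbO with hb1 | hb1
      · have hwb : x ^ (6 * k + 5) = b := mul_left_cancel₀ (mul_ne_zero two_ne hbO)
          (show 2 * b * x ^ (6 * k + 5) = 2 * b * b by
            linear_combination key + habO + b ^ 2 * hb1)
        exact absurd (by rw [hwb, sub_self]) hbv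
      · exact absurd (mul_left_cancel₀ (mul_ne_zero two_ne hbO)
          (show 2 * b * x ^ (6 * k + 5) = 2 * b * 0 by
            linear_combination key + habO + b ^ 2 * hb1)) hv0
    -- (M,N)
    · obtain ⟨hbN, habN⟩ := hNb hyS
      obtain ⟨hv0, hbv, hxv, key, sv, sbv, hb⟩ := hMb x hxS hx0 hxa0 hx1 hx2
      rcases hm b hbN with hb1 | hb1
      · exact absurd (mul_left_cancel₀ (mul_ne_zero two_ne hbN)
          (show 2 * b * x ^ (6 * k + 5) = 2 * b * 0 by
            linear_combination key - habN - b ^ 2 * hb1)) hv0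
      · have hwb : x ^ (6 * k + 5) = b := mul_left_cancel₀ (mul_ne_zero two_ne hbN)
          (show 2 * b * x ^ (6 * k + 5) = 2 * b * b by
            linear_combination key - habN - b ^ 2 * hb1)
        exact absurd (by rw [hwb, sub_self]) hbv
    -- (M,P)
    · obtain ⟨hv0, hbv, hxv, keyx, sv, sbv, hb⟩ := hMb x hxS hx0 hxa0 hx1 hx2
      obtain ⟨hw0, hbw, hyv, keyy, sw, sbw, _⟩ := hPb y hyS hy0 hya0 hy1 hy2
      have hw : x ^ (6 * k + 5) = b - y ^ (6 * k + 5) :=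
        mul_left_cancel₀ (mul_ne_zero two_ne hb)
          (show 2 * b * x ^ (6 * k + 5) = 2 * b * (b - y ^ (6 * k + 5)) by
            linear_combination keyx + keyy)
      rw [hw] at sv
      exact absurd (sbw.symm.trans sv) (fun h => two_ne (by linear_combination h))
    -- (M,M)
    · obtain ⟨hv0, hbv, hxv, keyx, sv, sbv, hb⟩ := hMb x hxS hx0 hxa0 hx1 hx2
      obtain ⟨hw0, hbw, hyv, keyy, sw, sbw, _⟩ := hMb y hyS hy0 hya0 hy1 hy2
      have hvw : x ^ (6 * k + 5) = y ^ (6 * k + 5) :=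
        mul_left_cancel₀ (mul_ne_zero two_ne hb) (by linear_combination keyx - keyy)
      rw [hxv, hyv, hvw]
  have hT2 : ∀ x y : F, x ∈ T2 → y ∈ T2 → x = y := by
    rintro x y ⟨hxS, hx0, hxa0, hx1, hx2⟩ ⟨hyS, hy0, hya0, hy1, hy2⟩
    obtain ⟨hv0, hbv, ex1, ex2, ex3, ex4⟩ := core x hxS hx0 hxa0
    obtain ⟨hw0, hbw, ey1, ey2, ey3, ey4⟩ := core y hyS hy0 hya0
    rw [hx1, one_mul] at ex1
    rw [hx2] at ex2
    rw [hy1, one_mul] at ey1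
    rw [hy2] at ey2
    have h : (x ^ (6 * k + 5) - y ^ (6 * k + 5)) *
        (2 * (x ^ (6 * k + 5) + y ^ (6 * k + 5)) - 2 * b) = 0 := by
      linear_combination (ex2 - ex1) - (ey2 - ey1)
    rcases mul_eq_zero.mp h with h' | h'
    · have hvw : x ^ (6 * k + 5) = y ^ (6 * k + 5) := by linear_combination h'
      rw [ex1, ey1, hvw]
    · have hw : y ^ (6 * k + 5) = b - x ^ (6 * k + 5) :=
        mul_left_cancel₀ two_ne (by linear_combination h')
      have e1 : (b - x ^ (6 * k + 5)) ^ (4 * k + 3) = 1 := by rw [← hw, ey3, hy1]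
      have e2 : (b - x ^ (6 * k + 5)) ^ (4 * k + 3) = -1 := by rw [ex4, hx2]
      exact absurd (e1.symm.trans e2) (fun h => two_ne (by linear_combination h))
  have hT3 : ∀ x y : F, x ∈ T3 → y ∈ T3 → x = y := by
    rintro x y ⟨hxS, hx0, hxa0, hx1, hx2⟩ ⟨hyS, hy0, hya0, hy1, hy2⟩
    obtain ⟨hv0, hbv, ex1, ex2, ex3, ex4⟩ := core x hxS hx0 hxa0
    obtain ⟨hw0, hbw, ey1, ey2, ey3, ey4⟩ := core y hyS hy0 hya0
    rw [hx1] at ex1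
    rw [hx2, one_mul] at ex2
    rw [hy1] at ey1
    rw [hy2, one_mul] at ey2
    have h : (x ^ (6 * k + 5) - y ^ (6 * k + 5)) *
        (2 * (x ^ (6 * k + 5) + y ^ (6 * k + 5)) - 2 * b) = 0 := by
      linear_combination (ex1 - ex2) - (ey1 - ey2)
    rcases mul_eq_zero.mp h with h' | h'
    · have hvw : x ^ (6 * k + 5) = y ^ (6 * k + 5) := by linear_combination h'
      rw [ex1, ey1, hvw]
    · have hw : y ^ (6 * k + 5) = b - x ^ (6 * k + 5) :=
        mul_left_cancel₀ two_ne (by linear_combination h')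
      have e1 : (b - x ^ (6 * k + 5)) ^ (4 * k + 3) = -1 := by rw [← hw, ey3, hy1]
      have e2 : (b - x ^ (6 * k + 5)) ^ (4 * k + 3) = 1 := by rw [ex4, hx2]
      exact absurd (e1.symm.trans e2) (fun h => two_ne (by linear_combination -h))
  have hcov : {x : F | (x + a) ^ (6 * k + 5) + x ^ (6 * k + 5) = b} ⊆ T1 ∪ T2 ∪ T3 := by
    intro x hx
    simp only [Set.mem_union]
    by_cases h0 : x = 0
    · exact Or.inl (Or.inl ⟨hx, Or.inl h0⟩)
    by_cases hN : x = -a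
    · exact Or.inl (Or.inl ⟨hx, Or.inr (Or.inl hN)⟩)
    have hxa0 : x + a ≠ 0 := fun h => hN (by linear_combination h)
    rcases hm x h0 with s1 | s1 <;> rcases hm (x + a) hxa0 with s2 | s2
    · exact Or.inl (Or.inl ⟨hx, Or.inr (Or.inr (Or.inl ⟨h0, hxa0, s1, s2⟩))⟩)
    · exact Or.inl (Or.inr ⟨hx, h0, hxa0, s1, s2⟩)
    · exact Or.inr ⟨hx, h0, hxa0, s1, s2⟩
    · exact Or.inl (Or.inl ⟨hx, Or.inr (Or.inr (Or.inr ⟨h0, hxa0, s1, s2⟩))⟩)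
  have c1 : T1.ncard ≤ 1 := (Set.ncard_le_one_iff (Set.toFinite _)).mpr (fun hx hy => hT1 _ _ hx hy)
  have c2 : T2.ncard ≤ 1 := (Set.ncard_le_one_iff (Set.toFinite _)).mpr (fun hx hy => hT2 _ _ hx hy)
  have c3 : T3.ncard ≤ 1 := (Set.ncard_le_one_iff (Set.toFinite _)).mpr (fun hx hy => hT3 _ _ hx hy)
  calc {x : F | (x + a) ^ (6 * k + 5) + x ^ (6 * k + 5) = b}.ncard
      ≤ (T1 ∪ T2 ∪ T3).ncard := Set.ncard_le_ncard hcov (Set.toFinite _)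
    _ ≤ (T1 ∪ T2).ncard + T3.ncard := Set.ncard_union_le _ _
    _ ≤ T1.ncard + T2.ncard + T3.ncard :=
        add_le_add_left (Set.ncard_union_le _ _) _
    _ ≤ 1 + 1 + 1 := by
        exact add_le_add (add_le_add c1 c2) c3
    _ = 3 := by norm_num
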